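/- Every uniform CPC-strongly irreducible tree-shift is strongly irreducible: if T is CPC USI, then T is SI. -/

import Mathlib

namespace TreeShiftPaper

/-- Words over the alphabet `Σ = {0, …, k-1}`: nodes of the `k`-tree. -/
abbrev Word (k : ℕ) := List (Fin k)

variable {k : ℕ} {A : Type*}

/-- A set of words is prefix-closed if it contains every prefix of each of its elements. -/
def PrefixClosed (S : Set (Word k)) : Prop :=
  ∀ w ∈ S, ∀ v : Word k, v <+: w → v ∈ S

/-- The pattern with support `S` and labels `u` appears in the labeled tree `t`. -/
def PatternAppears (t : Word k → A) (S : Set (Word k)) (u : Word k → A) : Prop :=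
  ∃ s : Word k, ∀ w ∈ S, t (s ++ w) = u w

/-- The set of labeled trees avoiding every pattern of the forbidden family `F`. -/
def treeShiftOf (F : Set ((Set (Word k)) × (Word k → A))) : Set (Word k → A) :=
  {t | ∀ p ∈ F, ¬ PatternAppears t p.1 p.2}

/-- `T` is a tree-shift: it is defined by some forbidden set of patterns
(each with finite prefix-closed support). -/
def IsTreeShift (T : Set (Word k → A)) : Prop :=
  ∃ F : Set ((Set (Word k)) × (Word k → A)),
    (∀ p ∈ F, p.1.Finite ∧ PrefixClosed p.1) ∧ T = treeShiftOf F

/-- `T` is a tree-shift of finite type: the forbidden set can be chosen finite. -/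
def IsTreeSFT (T : Set (Word k → A)) : Prop :=
  ∃ F : Set ((Set (Word k)) × (Word k → A)),
    F.Finite ∧ (∀ p ∈ F, p.1.Finite ∧ PrefixClosed p.1) ∧ T = treeShiftOf F

/-- The finite word `w` occurs in the one-sided sequence `x` at position `i`. -/
def OccursAt (x : ℕ → A) (i : ℕ) (w : List A) : Prop :=
  ∀ j : Fin w.length, x (i + (j : ℕ)) = w.get j

/-- The one-sided shift space defined by the forbidden set of words `F`. -/
def shiftOf (F : Set (List A)) : Set (ℕ → A) :=
  {x | ∀ w ∈ F, ∀ i : ℕ, ¬ OccursAt x i w}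

/-- `X` is a one-sided shift space. -/
def IsShift (X : Set (ℕ → A)) : Prop := ∃ F : Set (List A), X = shiftOf F

/-- `X` is a one-sided shift of finite type. -/
def IsSFT (X : Set (ℕ → A)) : Prop :=
  ∃ F : Set (List A), F.Finite ∧ X = shiftOf F

/-- A chain: an infinite path in the tree starting at the root. -/
def IsChain (c : ℕ → Word k) : Prop :=
  c 0 = [] ∧ ∀ n : ℕ, ∃ i : Fin k, c (n + 1) = c n ++ [i]

/-- The hom tree-shift associated with a one-sided shift space `X`: labeled trees whose
projection along every chain lies in `X`. -/
def homTree (k : ℕ) (X : Set (ℕ → A)) : Set (Word k → A) :=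
  {t | ∀ c : ℕ → Word k, IsChain c → (fun n => t (c n)) ∈ X}

/-- `Y` is a sofic one-sided shift: image of an SFT under a sliding block code induced
by an `n`-block map. -/
def IsSofic (Y : Set (ℕ → A)) : Prop :=
  ∃ (B : Type) (_ : Fintype B) (X : Set (ℕ → B)) (n : ℕ) (f : (ℕ → B) → A),
    IsSFT X ∧ (∀ u v : ℕ → B, (∀ j < n, u j = v j) → f u = f v) ∧
    (fun x : ℕ → B => fun i => f (fun j => x (i + j))) '' X = Y

/-- `T` is a sofic tree-shift: image of a tree-SFT under the map induced by an
`n`-block map. -/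
def IsSoficTree (T : Set (Word k → A)) : Prop :=
  ∃ (B : Type) (_ : Fintype B) (T' : Set (Word k → B)) (n : ℕ) (g : (Word k → B) → A),
    IsTreeSFT T' ∧
    (∀ u v : Word k → B, (∀ w : Word k, w.length ≤ n → u w = v w) → g u = g v) ∧
    (fun t : Word k → B => fun w => g (fun z => t (w ++ z))) '' T' = T

/-- The Markov tree-shift determined by `k` binary `d × d` transition matrices. -/
def markovTree (k d : ℕ) (M : Fin k → Matrix (Fin d) (Fin d) Bool) :
    Set (Word k → Fin d) :=
  {t | ∀ w : Word k, ∀ i : Fin k, M i (t w) (t (w ++ [i])) = true}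

/-- The one-sided Markov (vertex) shift determined by a binary `d × d` matrix. -/
def markovShift (d : ℕ) (M : Matrix (Fin d) (Fin d) Bool) : Set (ℕ → Fin d) :=
  {x | ∀ i : ℕ, M (x i) (x (i + 1)) = true}

/-- The pattern with support `S` and labels `u` is admissible in `T`. -/
def AdmissiblePattern (T : Set (Word k → A)) (S : Set (Word k)) (u : Word k → A) : Prop :=
  ∃ t ∈ T, ∃ s : Word k, ∀ w ∈ S, t (s ++ w) = u w

/-- The `n`-block `u` (a labeling of `Δ_n`) is admissible in `T`. -/
def AdmissibleBlock (T : Set (Word k → A)) (n : ℕ) (u : Word k → A) : Prop :=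
  ∃ t ∈ T, ∃ s : Word k, ∀ w : Word k, w.length ≤ n → t (s ++ w) = u w

/-- Word distance on the `k`-tree:
`d(x,y) = |x| + |y| - 2 · max{|w| : w` a common prefix of `x` and `y}`. -/
noncomputable def wordDist (x y : Word k) : ℕ :=
  x.length + y.length - 2 * sSup {m : ℕ | ∃ w : Word k, w <+: x ∧ w <+: y ∧ w.length = m}

/-- The boundary `∂S = {w ∈ S : wΣ ∩ S = ∅}` of a support `S`. -/
def boundary (S : Set (Word k)) : Set (Word k) :=
  {w | w ∈ S ∧ ∀ i : Fin k, w ++ [i] ∉ S}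

/-- A complete prefix code: a finite prefix set such that every word of length at least
`max_{z ∈ P} |z|` has a prefix in `P`. -/
def IsCPC (P : Set (Word k)) : Prop :=
  P.Finite ∧ (∀ x ∈ P, ∀ y ∈ P, x <+: y → x = y) ∧
  ∀ w : Word k, (∀ z ∈ P, z.length ≤ w.length) → ∃ x ∈ P, x <+: w

/-- Strong irreducibility with gap `N`. -/
def SIGap (T : Set (Word k → A)) (N : ℕ) : Prop :=
  ∀ (Su Sv : Set (Word k)) (u v : Word k → A),
    Su.Finite → PrefixClosed Su → Sv.Finite → PrefixClosed Sv →
    AdmissiblePattern T Su u → AdmissiblePattern T Sv v →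
    ∀ w : Word k, (∀ h ∈ Su, N ≤ wordDist w h) →
      ∃ t ∈ T, (∀ z ∈ Su, t z = u z) ∧ ∀ z ∈ Sv, t (w ++ z) = v z

/-- `T` is strongly irreducible (SI). -/
def SI (T : Set (Word k → A)) : Prop := ∃ N : ℕ, SIGap T N

/-- `T` is block gluing (BG). -/
def BG (T : Set (Word k → A)) : Prop :=
  ∃ N : ℕ, ∀ (n m : ℕ) (u v : Word k → A),
    AdmissibleBlock T n u → AdmissibleBlock T m v →
    ∀ w : Word k, N + n ≤ w.length →
      ∃ t ∈ T, (∀ z : Word k, z.length ≤ n → t z = u z) ∧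
        ∀ z : Word k, z.length ≤ m → t (w ++ z) = v z

/-- `T` is topologically mixing (TM). -/
def TM (T : Set (Word k → A)) : Prop :=
  ∀ H₁ H₂ : Set (Word k), H₁.Finite → H₂.Finite →
    ∃ N : ℕ, ∀ t₁ ∈ T, ∀ t₂ ∈ T, ∀ w : Word k, (∀ h ∈ H₁, N ≤ wordDist w h) →
      ∃ t ∈ T, (∀ z ∈ H₁, t z = t₁ z) ∧ ∀ z ∈ H₂, t (w ++ z) = t₂ z

/-- `T` is irreducible (IR). -/
def IR (T : Set (Word k → A)) : Prop :=
  ∀ (n m : ℕ) (u v : Word k → A),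
    AdmissibleBlock T n u → AdmissibleBlock T m v →
    ∃ w : Word k, n < w.length ∧
      ∃ t ∈ T, (∀ z : Word k, z.length ≤ n → t z = u z) ∧
        ∀ z : Word k, z.length ≤ m → t (w ++ z) = v z

/-- `T` is CPC-strongly irreducible via the prefix set `P`. -/
def CPCSIWith (T : Set (Word k → A)) (P : Set (Word k)) : Prop :=
  ∀ (Su Sv : Set (Word k)) (u v : Word k → A),
    Su.Finite → PrefixClosed Su → Sv.Finite → PrefixClosed Sv →
    AdmissiblePattern T Su u → AdmissiblePattern T Sv v →
    ∃ t ∈ T, (∀ z ∈ Su, t z = u z) ∧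
      ∀ w ∈ boundary Su, ∀ z ∈ P, ∀ y ∈ Sv, t (w ++ z ++ y) = v y

/-- `T` is CPC-strongly irreducible (CPC SI). -/
def CPCSI (T : Set (Word k → A)) : Prop := ∃ P : Set (Word k), IsCPC P ∧ CPCSIWith T P

/-- `T` is uniform CPC-strongly irreducible (CPC USI): CPC SI with `P = Σ^N`. -/
def CPCUSI (T : Set (Word k → A)) : Prop :=
  ∃ N : ℕ, CPCSIWith T {z : Word k | z.length = N}

/-- `T` is CPC-block gluing via the prefix set `P`. -/
def CPCBGWith (T : Set (Word k → A)) (P : Set (Word k)) : Prop :=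
  ∀ (n m : ℕ) (u v : Word k → A),
    AdmissibleBlock T n u → AdmissibleBlock T m v →
    ∃ t ∈ T, (∀ z : Word k, z.length ≤ n → t z = u z) ∧
      ∀ w : Word k, w.length = n → ∀ z ∈ P, ∀ y : Word k, y.length ≤ m →
        t (w ++ z ++ y) = v y

/-- `T` is CPC-block gluing (CPC BG). -/
def CPCBG (T : Set (Word k → A)) : Prop := ∃ P : Set (Word k), IsCPC P ∧ CPCBGWith T P

/-- `T` is uniform CPC-block gluing (CPC UBG): CPC BG with `P = Σ^N`. -/
def CPCUBG (T : Set (Word k → A)) : Prop :=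
  ∃ N : ℕ, CPCBGWith T {z : Word k | z.length = N}

/-- `T` is CPC-irreducible (CPC IR). -/
def CPCIR (T : Set (Word k → A)) : Prop :=
  ∀ (n m : ℕ) (u v : Word k → A),
    AdmissibleBlock T n u → AdmissibleBlock T m v →
    ∃ P : Set (Word k), IsCPC P ∧ (∀ z ∈ P, n + 1 ≤ z.length) ∧
      ∃ t ∈ T, (∀ z : Word k, z.length ≤ n → t z = u z) ∧
        ∀ w ∈ P, ∀ y : Word k, y.length ≤ m → t (w ++ y) = v y

/-- The finite word `u` is admissible in the one-sided shift space `X`. -/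
def WordAdmissible (X : Set (ℕ → A)) (u : List A) : Prop :=
  ∃ x ∈ X, ∃ i : ℕ, OccursAt x i u

/-- The one-sided shift space `X` is topologically mixing. -/
def MixingShift (X : Set (ℕ → A)) : Prop :=
  ∀ u v : List A, WordAdmissible X u → WordAdmissible X v →
    ∃ N : ℕ, ∀ n ≥ N, ∃ x ∈ X, OccursAt x 0 u ∧ OccursAt x (u.length + n) v

/-- The one-sided shift space `X` is transitive (irreducible). -/
def TransitiveShift (X : Set (ℕ → A)) : Prop :=
  ∀ u v : List A, WordAdmissible X u → WordAdmissible X v →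
    ∃ x ∈ X, ∃ n : ℕ, u.length ≤ n ∧ OccursAt x 0 u ∧ OccursAt x n v

end TreeShiftPaper

namespace TreeShiftPaper

/-- Every uniform CPC-strongly irreducible tree-shift is strongly irreducible. -/
theorem stmt5 {k : ℕ} (hk : 2 ≤ k) {A : Type*} [Fintype A] (T : Set (Word k → A))
    (hT : IsTreeShift T) (h : CPCUSI T) : SI T := by
  classical
  obtain ⟨F, hFpc, hTF⟩ := hT
  obtain ⟨N, hP⟩ := h
  -- T is shift invariant
  have hshift : ∀ t ∈ T, ∀ s : Word k, (fun x => t (s ++ x)) ∈ T := by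
    rw [hTF]
    intro t ht s p hp hap
    obtain ⟨s', hs'⟩ := hap
    exact ht p hp ⟨s ++ s', fun x hx => by
      rw [List.append_assoc]; exact hs' x hx⟩
  refine ⟨N + 2, ?_⟩
  intro Su Sv u v hSuf hSupc hSvf hSvpc hu hv w hw
  obtain ⟨t₁, ht₁T, s₁, hs₁⟩ := hv
  by_cases hlen : N ≤ w.length
  · -- long case: peel off the last N letters of w
    set b := w.take (w.length - N) with hb
    set z := w.drop (w.length - N) with hz
    have hbz : b ++ z = w := List.take_append_drop _ _
    have hzlen : z.length = N := by
      have := (List.length_drop : (w.drop (w.length - N)).length = _)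
      rw [← hz] at this; omega
    have hblen : b.length = w.length - N := by
      have := (List.length_take : (w.take (w.length - N)).length = _)
      rw [← hb] at this; omega
    obtain ⟨t₀, ht₀T, s₀, hs₀⟩ := hu
    set Su' : Set (Word k) := Su ∪ {p | p <+: b} with hSu'
    set u' : Word k → A := fun x => if x ∈ Su then u x else t₀ (s₀ ++ x) with hu'
    have hprefFin : {p : Word k | p <+: b}.Finite := by
      refine Set.Finite.subset (Set.finite_range
        (fun n : Fin (b.length + 1) => b.take ↑n)) ?_
      intro p hp
      refine ⟨⟨p.length, by have := hp.length_le; omega⟩, ?_⟩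
      exact (List.prefix_iff_eq_take.mp hp).symm
    have hSu'f : Su'.Finite := hSuf.union hprefFin
    have hSu'pc : PrefixClosed Su' := by
      rintro x (hx | hx) p hp
      · exact Or.inl (hSupc x hx p hp)
      · exact Or.inr (hp.trans hx)
    have hu'adm : AdmissiblePattern T Su' u' := by
      refine ⟨t₀, ht₀T, s₀, fun x hx => ?_⟩
      by_cases hxS : x ∈ Su
      · rw [hu']; simp only [hxS, if_pos]; exact hs₀ x hxS
      · rw [hu']; simp only [hxS, if_neg, if_false]
    have hbd : b ∈ boundary Su' := by
      refine ⟨Or.inr List.prefix_rfl, fun i => ?_⟩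
      rintro (hin | hpre)
      · have h1 := hw _ hin
        have hmem : b.length ∈
            {m : ℕ | ∃ c : Word k, c <+: w ∧ c <+: b ++ [i] ∧ c.length = m} :=
          ⟨b, List.take_prefix _ _, ⟨[i], rfl⟩, rfl⟩
        have hbdd : BddAbove
            {m : ℕ | ∃ c : Word k, c <+: w ∧ c <+: b ++ [i] ∧ c.length = m} := by
          refine ⟨w.length, ?_⟩
          rintro m ⟨c, hc1, _, hc3⟩
          exact hc3 ▸ hc1.length_le
        have h2 := le_csSup hbdd hmem
        have h3 : wordDist w (b ++ [i]) =
            w.length + (b.length + 1) -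
              2 * sSup {m : ℕ | ∃ c : Word k, c <+: w ∧ c <+: b ++ [i] ∧ c.length = m} := by
          simp [wordDist, List.length_append]
        omega
      · have := hpre.length_le
        simp at this
    obtain ⟨t, htT, htu, htb⟩ := hP Su' Sv u' v hSu'f hSu'pc hSvf hSvpc hu'adm
      ⟨t₁, ht₁T, s₁, hs₁⟩
    refine ⟨t, htT, fun x hx => ?_, fun y hy => ?_⟩
    · rw [htu x (Or.inl hx), hu']; simp only [hx, if_pos]
    · have := htb b hbd z hzlen y hy
      rw [← hbz]
      exact this
  · -- short case: Su must be empty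
    have hSuE : Su = ∅ := by
      by_contra hne
      obtain ⟨x, hx⟩ := Set.nonempty_iff_ne_empty.mpr hne
      have hnil : ([] : Word k) ∈ Su := hSupc x hx [] (List.nil_prefix)
      have h1 := hw [] hnil
      have hset : {m : ℕ | ∃ c : Word k, c <+: w ∧ c <+: ([] : Word k) ∧ c.length = m}
          = {0} := by
        ext m
        constructor
        · rintro ⟨c, _, hc2, hc3⟩
          have : c = [] := List.prefix_nil.mp hc2
          subst this
          simpa using hc3.symm
        · rintro rfl
          exact ⟨[], List.nil_prefix, List.prefix_rfl, rfl⟩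
      have h2 : wordDist w ([] : Word k) = w.length := by
        rw [wordDist, hset, csSup_singleton]
        simp
      rw [h2] at h1
      omega
    subst hSuE
    have hkpos : 0 < k := by omega
    set t₂ : Word k → A := fun x => t₁ (s₁ ++ x) with ht₂def
    have ht₂T : t₂ ∈ T := hshift t₁ ht₁T s₁
    have hadm : AdmissiblePattern T {([] : Word k)} t₂ :=
      ⟨t₂, ht₂T, [], fun x _ => rfl⟩
    have hsingpc : PrefixClosed {([] : Word k)} := by
      intro x hx p hp
      simp only [Set.mem_singleton_iff] at hx ⊢
      subst hx
      exact List.prefix_nil.mp hp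
    have hbd0 : ([] : Word k) ∈ boundary {([] : Word k)} := by
      refine ⟨rfl, fun i hmem => ?_⟩
      simp at hmem
    obtain ⟨t₃, ht₃T, _, htb⟩ := hP {([] : Word k)} Sv t₂ v (Set.finite_singleton _)
      hsingpc hSvf hSvpc hadm ⟨t₁, ht₁T, s₁, hs₁⟩
    set q : Word k := List.replicate (N - w.length) (⟨0, hkpos⟩ : Fin k) with hq
    refine ⟨fun x => t₃ (q ++ x), hshift t₃ ht₃T q, fun x hx => hx.elim, fun y hy => ?_⟩
    have hlenqw : (q ++ w).length = N := by
      simp [hq]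
      omega
    have hkey := htb [] hbd0 (q ++ w) hlenqw y hy
    simp only []
    rw [← List.append_assoc]
    exact hkey

end TreeShiftPaper
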